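/- Let n ≥ 1 and let y ∈ ℝⁿ be weakly increasing, with mean m = (y₁ + ⋯ + y_n)/n. Then for every weakly decreasing z ∈ ℝⁿ one has ‖y − m·𝟙‖ ≤ ‖y − z‖ in the Euclidean norm; that is, the constant vector m·𝟙 is a nearest point to y in the closed convex cone of weakly decreasing vectors. -/

import Mathlib

open RealInnerProductSpace


/-- The constant vector `m·𝟙` in Euclidean space. -/
noncomputable def constVec (n : ℕ) (m : ℝ) : EuclideanSpace ℝ (Fin n) := WithLp.toLp 2 (fun _ => m)

theorem mean_is_nearest_decreasing_of_increasing
    (n : ℕ) (hn : 1 ≤ n) (y : EuclideanSpace ℝ (Fin n))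
    (hy : ∀ i j : Fin n, i ≤ j → y i ≤ y j)
    (m : ℝ) (hm : m = (∑ i, y i) / n)
    (z : EuclideanSpace ℝ (Fin n)) (hz : ∀ i j : Fin n, i ≤ j → z j ≤ z i) :
    ‖y - constVec n m‖ ≤ ‖y - z‖ := by
  have hn0 : (0:ℝ) < n := by exact_mod_cast hn
  -- Chebyshev: y monotone, z antitone ⇒ antivary
  have hav : Antivary y z := by
    intro i j hij
    by_cases h : j ≤ i
    · exact hy j i h
    · exact absurd hij (not_lt.2 (hz i j (le_of_not_ge h)))
  have cheb : (n : ℝ) * ∑ i, y i * z i ≤ (∑ i, y i) * ∑ i, z i := by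
    simpa [Fintype.card_fin] using hav.card_mul_sum_le_sum_mul_sum
  -- key inner product inequality
  have hinner : 0 ≤ ⟪y - constVec n m, constVec n m - z⟫ := by
    have : ⟪y - constVec n m, constVec n m - z⟫
        = ∑ i, (y i - m) * (m - z i) := by
      simp [PiLp.inner_apply, constVec, mul_comm]
    rw [this]
    have hym : ∑ i, (y i - m) = 0 := by
      simp [Finset.sum_sub_distrib, hm]
      field_simp
      ring
    have hsum : ∑ i, (y i - m) * (m - z i)
        = -(∑ i, y i * z i) + m * ∑ i, z i := by
      calc ∑ i, (y i - m) * (m - z i)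
          = ∑ i, ((y i - m) * m - y i * z i + m * z i) :=
            Finset.sum_congr rfl fun i _ => by ring
        _ = (∑ i, (y i - m)) * m - (∑ i, y i * z i) + m * ∑ i, z i := by
            rw [Finset.sum_add_distrib, Finset.sum_sub_distrib, ← Finset.sum_mul,
              ← Finset.mul_sum]
        _ = -(∑ i, y i * z i) + m * ∑ i, z i := by rw [hym]; ring
    rw [hsum, hm]
    have hle : ∑ i, y i * z i ≤ (∑ i, y i) * (∑ i, z i) / n := by
      rw [le_div_iff₀ hn0]; linarith
    have heq : (∑ i, y i) / n * ∑ i, z i = (∑ i, y i) * (∑ i, z i) / n := by ring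
    linarith
  -- norm decomposition
  have hdecomp : y - z = (y - constVec n m) + (constVec n m - z) := by abel
  have := norm_add_sq_real (y - constVec n m) (constVec n m - z)
  rw [← hdecomp] at this
  have hsq : ‖y - constVec n m‖ ^ 2 ≤ ‖y - z‖ ^ 2 := by
    rw [this]; nlinarith [sq_nonneg ‖constVec n m - z‖]
  have h := Real.sqrt_le_sqrt hsq
  rwa [Real.sqrt_sq (norm_nonneg _), Real.sqrt_sq (norm_nonneg _)] at h
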